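/- Let K be a field of prime characteristic p, f ∈ K[x] a monic irreducible polynomial, and L a splitting field of f over K in which f factors as ∏_{j=1}^{d}(x−α_j)^{p^a} with α_1, …, α_d distinct and a ≥ 1. Let I be a finite index set, e_i positive integers, and X ∈ Mat_n(K) such that K^n as a K[x]-module via X is isomorphic to ⊕_{i∈I} K[x]/(f^{e_i}). Then L^n, as an L[x]-module with x acting as the entrywise image of X in Mat_n(L), is isomorphic to ⊕_{j=1}^{d} ⊕_{i∈I} L[x]/((x−α_j)^{p^a·e_i}). -/

import Mathlib

open scoped DirectSum


open Polynomial TensorProduct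
set_option maxHeartbeats 1000000
set_option synthInstance.maxHeartbeats 400000

section Aux
variable {K L : Type*} [Field K] [Field L] [Algebra K L]

/-- multiplication by `X` as a `K`-linear endomorphism of a `K[X]`-module. -/
noncomputable def xOp (K : Type*) [CommRing K] (M : Type*) [AddCommGroup M] [Module K M]
    [Module (Polynomial K) M] [IsScalarTower K (Polynomial K) M] : M →ₗ[K] M :=
  (LinearMap.lsmul (Polynomial K) M (X : Polynomial K)).restrictScalars K

@[simp] lemma xOp_apply (K : Type*) [CommRing K] {M : Type*} [AddCommGroup M] [Module K M]
    [Module (Polynomial K) M] [IsScalarTower K (Polynomial K) M] (m : M) :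
    xOp K M m = (X : Polynomial K) • m := rfl

variable (L) in
/-- The `K`-algebra map `K[X]⧸I → L[X]⧸I.map`. -/
noncomputable def qmapL (I : Ideal (Polynomial K)) :
    (Polynomial K ⧸ I) →ₐ[K] (Polynomial L ⧸ I.map (mapRingHom (algebraMap K L))) :=
  Ideal.Quotient.liftₐ I
    ((Ideal.Quotient.mkₐ K (I.map (mapRingHom (algebraMap K L)))).comp
      (mapAlgHom (Algebra.ofId K L)))
    (fun a ha => by
      have : (mapRingHom (algebraMap K L)) a ∈ I.map (mapRingHom (algebraMap K L)) :=
        Ideal.mem_map_of_mem _ ha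
      simp only [AlgHom.comp_apply, coe_mapAlgHom, Ideal.Quotient.mkₐ_eq_mk]
      rw [show Polynomial.map (Algebra.ofId K L) a = Polynomial.map (algebraMap K L) a from rfl]
      exact Ideal.Quotient.eq_zero_iff_mem.mpr this)

@[simp] lemma qmapL_mk (I : Ideal (Polynomial K)) (p : Polynomial K) :
    qmapL L I (Ideal.Quotient.mk I p)
      = Ideal.Quotient.mk (I.map (mapRingHom (algebraMap K L))) (p.map (algebraMap K L)) := by
  simp only [qmapL, Ideal.Quotient.liftₐ_apply, Ideal.Quotient.lift_mk, AlgHom.coe_comp,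
    Function.comp_apply, coe_mapAlgHom, Ideal.Quotient.mkₐ_eq_mk]
  rfl
end Aux


section Aux
variable {K L : Type*} [Field K] [Field L] [Algebra K L]

variable (L) in
noncomputable def tqF (I : Ideal (Polynomial K)) :
    L ⊗[K] (Polynomial K ⧸ I) →ₗ[L] (Polynomial L ⧸ I.map (mapRingHom (algebraMap K L))) :=
  TensorProduct.AlgebraTensorModule.lift
    { toFun := fun l => l • (Ideal.Quotient.liftₐ I
        ((Ideal.Quotient.mkₐ K (I.map (mapRingHom (algebraMap K L)))).comp
          (mapAlgHom (Algebra.ofId K L)))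
        (fun a ha => by
          have : (mapRingHom (algebraMap K L)) a ∈ I.map (mapRingHom (algebraMap K L)) :=
            Ideal.mem_map_of_mem _ ha
          simp only [AlgHom.comp_apply, coe_mapAlgHom, Ideal.Quotient.mkₐ_eq_mk]
          rw [show Polynomial.map (Algebra.ofId K L) a = Polynomial.map (algebraMap K L) a from rfl]
          exact Ideal.Quotient.eq_zero_iff_mem.mpr this)).toLinearMap
      map_add' := fun a b => add_smul a b _
      map_smul' := fun a l => by simp [mul_smul] }

@[simp] lemma tqF_tmul (I : Ideal (Polynomial K)) (l : L) (p : Polynomial K) :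
    tqF L I (l ⊗ₜ (Ideal.Quotient.mk I p))
      = l • Ideal.Quotient.mk (I.map (mapRingHom (algebraMap K L))) (p.map (algebraMap K L)) := by
  simp only [tqF, TensorProduct.AlgebraTensorModule.lift_apply, TensorProduct.lift.tmul]
  simp [Ideal.Quotient.liftₐ_apply, Ideal.Quotient.lift_mk]
  rfl
end Aux

section Aux2
variable {K L : Type*} [Field K] [Field L] [Algebra K L]

variable (L) in
noncomputable def tqPsi (I : Ideal (Polynomial K)) :
    Polynomial L →ₐ[L] L ⊗[K] (Polynomial K ⧸ I) :=
  aeval ((1 : L) ⊗ₜ[K] (Ideal.Quotient.mk I X))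

lemma tqPsi_map (I : Ideal (Polynomial K)) (p : Polynomial K) :
    tqPsi L I (p.map (algebraMap K L)) = (1 : L) ⊗ₜ[K] (Ideal.Quotient.mk I p) := by
  have h1 : ((1 : L) ⊗ₜ[K] (Ideal.Quotient.mk I X) : L ⊗[K] (Polynomial K ⧸ I))
      = Algebra.TensorProduct.includeRight ((Ideal.Quotient.mkₐ K I) X) := rfl
  rw [tqPsi, aeval_map_algebraMap, h1, aeval_algHom_apply, aeval_algHom_apply,
    aeval_X_left_apply]
  rfl

variable (L) in
noncomputable def tqG (I : Ideal (Polynomial K)) :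
    (Polynomial L ⧸ I.map (mapRingHom (algebraMap K L))) →ₗ[L] L ⊗[K] (Polynomial K ⧸ I) :=
  (Ideal.Quotient.liftₐ _ (tqPsi L I) (by
    have hker : Ideal.map (mapRingHom (algebraMap K L)) I
        ≤ RingHom.ker (tqPsi L I).toRingHom := by
      rw [Ideal.map_le_iff_le_comap]
      intro p hp
      rw [Ideal.mem_comap, RingHom.mem_ker]
      show tqPsi L I (p.map (algebraMap K L)) = 0
      rw [tqPsi_map, Ideal.Quotient.eq_zero_iff_mem.mpr hp, tmul_zero]
    intro a ha
    exact hker ha)).toLinearMap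

@[simp] lemma tqG_mk (I : Ideal (Polynomial K)) (q : Polynomial L) :
    tqG L I (Ideal.Quotient.mk _ q) = tqPsi L I q := by
  simp [tqG, Ideal.Quotient.liftₐ_apply, Ideal.Quotient.lift_mk]
  rfl
end Aux2

section Aux3
variable {K L : Type*} [Field K] [Field L] [Algebra K L]

variable (L) in
set_option maxHeartbeats 1000000 in
noncomputable def tensorQuotEquiv (I : Ideal (Polynomial K)) :
    L ⊗[K] (Polynomial K ⧸ I) ≃ₗ[L] (Polynomial L ⧸ I.map (mapRingHom (algebraMap K L))) :=
  LinearEquiv.ofLinear (tqF L I) (tqG L I)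
    (by
      refine LinearMap.ext fun x => ?_
      obtain ⟨q, rfl⟩ := Ideal.Quotient.mk_surjective x
      simp only [LinearMap.comp_apply, LinearMap.id_apply, tqG_mk]
      induction q using Polynomial.induction_on' with
      | add p q hp hq => simp only [map_add, hp, hq]
      | monomial n l =>
        have h1 : tqPsi L I (monomial n l) = l ⊗ₜ[K] (Ideal.Quotient.mk I (X ^ n)) := by
          rw [tqPsi, aeval_monomial]
          have : ((1 : L) ⊗ₜ[K] (Ideal.Quotient.mk I X) : L ⊗[K] (Polynomial K ⧸ I)) ^ n
              = (1 : L) ⊗ₜ[K] (Ideal.Quotient.mk I (X ^ n)) := by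
            rw [Algebra.TensorProduct.tmul_pow, one_pow, map_pow]
          rw [this, Algebra.TensorProduct.algebraMap_apply,
            Algebra.TensorProduct.tmul_mul_tmul, mul_one, one_mul]
          rfl
        rw [h1, tqF_tmul, Polynomial.map_pow, map_X]
        have h2 : l • (Ideal.Quotient.mk (I.map (mapRingHom (algebraMap K L))) (X ^ n))
            = Ideal.Quotient.mk (I.map (mapRingHom (algebraMap K L))) (l • X ^ n) := by
          rw [← Ideal.Quotient.mkₐ_eq_mk L, map_smul]
        rw [h2, smul_eq_C_mul, C_mul_X_pow_eq_monomial])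
    (by
      refine LinearMap.ext fun x => ?_
      refine TensorProduct.induction_on x
        (by simp only [LinearMap.comp_apply, LinearMap.id_apply, map_zero]) ?_ (fun u v hu hv => by
        simp only [LinearMap.comp_apply, LinearMap.id_apply, map_add] at hu hv ⊢
        rw [hu, hv])
      intro l q
      obtain ⟨p, rfl⟩ := Ideal.Quotient.mk_surjective q
      simp only [LinearMap.comp_apply, LinearMap.id_apply, tqF_tmul, map_smul, tqG_mk,
        tqPsi_map]
      rw [smul_tmul', smul_eq_mul, mul_one])

@[simp] lemma tensorQuotEquiv_tmul_mk (I : Ideal (Polynomial K)) (l : L) (p : Polynomial K) :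
    tensorQuotEquiv L I (l ⊗ₜ (Ideal.Quotient.mk I p))
      = l • Ideal.Quotient.mk (I.map (mapRingHom (algebraMap K L))) (p.map (algebraMap K L)) :=
  tqF_tmul I l p
end Aux3

section Aux4
variable {K L : Type*} [Field K] [Field L] [Algebra K L]

lemma smul_mk_quot {S : Type*} [CommRing S] {I : Ideal S} (c : S) (w : S ⧸ I) :
    c • w = Ideal.Quotient.mk I c * w := by
  obtain ⟨z, rfl⟩ := Ideal.Quotient.mk_surjective w
  rw [← map_mul, ← smul_eq_mul]
  exact (Submodule.Quotient.mk_smul I c z).symm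

set_option maxHeartbeats 800000 in
lemma tensorQuotEquiv_xOp (I : Ideal (Polynomial K)) (w : L ⊗[K] (Polynomial K ⧸ I)) :
    tensorQuotEquiv L I ((xOp K (Polynomial K ⧸ I)).baseChange L w)
      = (X : Polynomial L) • tensorQuotEquiv L I w := by
  refine TensorProduct.induction_on w
    (by simp only [map_zero, smul_zero]) ?_ (fun u v hu hv => by
      simp only [map_add, smul_add, hu, hv])
  intro l q
  obtain ⟨p, rfl⟩ := Ideal.Quotient.mk_surjective q
  have h0 : (xOp K (Polynomial K ⧸ I)).baseChange L (l ⊗ₜ (Ideal.Quotient.mk I p))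
      = l ⊗ₜ (Ideal.Quotient.mk I (X * p)) := by
    rw [LinearMap.baseChange_tmul, xOp_apply, smul_mk_quot, ← map_mul]
  rw [h0, tensorQuotEquiv_tmul_mk, tensorQuotEquiv_tmul_mk, Polynomial.map_mul, map_X,
    smul_mk_quot (X : Polynomial L), map_mul, mul_smul_comm]

/-- Upgrade the CRT ring equivalence to a linear equivalence. -/
noncomputable def crtLin {S : Type*} [CommRing S] {ι : Type*} [Finite ι] (J : ι → Ideal S)
    (hc : Pairwise (Function.onFun IsCoprime J)) : (S ⧸ ⨅ i, J i) ≃ₗ[S] ∀ i, S ⧸ J i :=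
  { Ideal.quotientInfRingEquivPiQuotient J hc with
    map_smul' := by
      intro c x
      obtain ⟨y, rfl⟩ := Ideal.Quotient.mk_surjective x
      show Ideal.quotientInfRingEquivPiQuotient J hc (c • Ideal.Quotient.mk _ y)
          = c • Ideal.quotientInfRingEquivPiQuotient J hc (Ideal.Quotient.mk _ y)
      rw [smul_mk_quot, map_mul]
      funext i
      show Ideal.Quotient.mk (J i) c * Ideal.Quotient.mk (J i) y
          = c • Ideal.Quotient.mk (J i) y
      rw [smul_mk_quot] }

lemma crtLin_mk {S : Type*} [CommRing S] {ι : Type*} [Finite ι] (J : ι → Ideal S)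
    (hc : Pairwise (Function.onFun IsCoprime J)) (z : S) :
    crtLin J hc (Ideal.Quotient.mk _ z) = fun i => Ideal.Quotient.mk (J i) z := rfl

/-- Reindexing of a doubly-indexed product of modules. -/
def piProdComm (S : Type*) [Semiring S] {ι κ : Type*} (B : ι → κ → Type*)
    [∀ i j, AddCommMonoid (B i j)] [∀ i j, Module S (B i j)] :
    (∀ j : κ, ∀ i : ι, B i j) ≃ₗ[S] ∀ q : ι × κ, B q.1 q.2 where
  toFun F q := F q.2 q.1
  invFun G j i := G (i, j)
  map_add' _ _ := rfl
  map_smul' _ _ := rfl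
  left_inv _ := rfl
  right_inv _ := rfl
end Aux4

/-- Let `K` have prime characteristic `p` and let `f` be a monic irreducible polynomial
which factors over a splitting field `L` as `∏ j, (x - α j) ^ p ^ a` with the `α j`
distinct and `a ≥ 1`. If `K^n` as a `K[x]`-module via `X` is `⨁ i, K[x]/(f ^ e i)`,
then `L^n` as an `L[x]`-module via the image of `X` is
`⨁ (j, i), L[x]/((x - α j) ^ (p ^ a * e i))`. -/
theorem baseChange_type_inseparable
    (K L : Type*) [Field K] [Field L] [Algebra K L]
    (p : ℕ) (hp : p.Prime) [CharP K p]
    (n : ℕ) (X : Matrix (Fin n) (Fin n) K)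
    (f : Polynomial K) (hmonic : f.Monic) (hirr : Irreducible f)
    [Polynomial.IsSplittingField K L f]
    (d : ℕ) (α : Fin d → L) (hinj : Function.Injective α)
    (a : ℕ) (ha : 1 ≤ a)
    (hfactor : f.map (algebraMap K L) =
      ∏ j : Fin d, (Polynomial.X - Polynomial.C (α j)) ^ p ^ a)
    (I : Type*) [Fintype I] [DecidableEq I] (e : I → ℕ) (hpos : ∀ i, 0 < e i)
    (hX : Nonempty ((Module.AEval' X.mulVecLin) ≃ₗ[Polynomial K]
      (⨁ i : I, Polynomial K ⧸ Ideal.span {f ^ e i}))) :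
    Nonempty ((Module.AEval' (X.map (algebraMap K L)).mulVecLin) ≃ₗ[Polynomial L]
      (⨁ q : Fin d × I,
        Polynomial L ⧸ Ideal.span
          {(Polynomial.X - Polynomial.C (α q.1)) ^ (p ^ a * e q.2)})) := by
  classical
  obtain ⟨g0⟩ := hX
  set σ := algebraMap K L with hσ
  -- the `K[X]`-linear structure theorem, in Pi form
  let Q : I → Type _ := fun i => Polynomial K ⧸ Ideal.span {f ^ e i}
  let g1 : Module.AEval' X.mulVecLin ≃ₗ[Polynomial K] ∀ i, Q i :=
    g0.trans (DirectSum.linearEquivFunOnFintype (Polynomial K) I _)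
  -- ideals over L
  let J : I → Ideal (Polynomial L) := fun i =>
    (Ideal.span {f ^ e i}).map (mapRingHom σ)
  -- the chain of L-linear equivalences
  let E1 : (Fin n → L) ≃ₗ[L] L ⊗[K] (Fin n → K) :=
    (TensorProduct.piScalarRight K L L (Fin n)).symm
  let E2 : (L ⊗[K] (Fin n → K)) ≃ₗ[L] L ⊗[K] (Module.AEval' X.mulVecLin) :=
    LinearEquiv.baseChange K L _ _ (Module.AEval'.of X.mulVecLin)
  let E3 : (L ⊗[K] (Module.AEval' X.mulVecLin)) ≃ₗ[L] L ⊗[K] (∀ i, Q i) :=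
    LinearEquiv.baseChange K L _ _ (g1.restrictScalars K)
  let E5 : (L ⊗[K] (∀ i, Q i)) ≃ₗ[L] ∀ i, L ⊗[K] Q i :=
    TensorProduct.piRight K L L Q
  let E6 : (∀ i, L ⊗[K] Q i) ≃ₗ[L] ∀ i, Polynomial L ⧸ J i :=
    LinearEquiv.piCongrRight (fun i => tensorQuotEquiv L (Ideal.span {f ^ e i}))
  let g : (Fin n → L) ≃ₗ[L] ∀ i, Polynomial L ⧸ J i :=
    E1 ≪≫ₗ E2 ≪≫ₗ E3 ≪≫ₗ E5 ≪≫ₗ E6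
  -- intertwining of the X-action
  have S1 : ∀ w : L ⊗[K] (Fin n → K),
      (TensorProduct.piScalarRight K L L (Fin n)) ((X.mulVecLin.baseChange L) w)
        = (X.map σ).mulVecLin ((TensorProduct.piScalarRight K L L (Fin n)) w) := by
    intro w
    refine TensorProduct.induction_on w (by simp) (fun c v => ?_)
      (fun u v hu hv => by simp only [map_add, hu, hv])
    rw [LinearMap.baseChange_tmul]
    funext k
    simp only [TensorProduct.piScalarRight_apply, TensorProduct.piScalarRightHom_tmul,
      Matrix.mulVecLin_apply, Matrix.mulVec, dotProduct, Matrix.map_apply,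
      Algebra.smul_def, map_sum, map_mul, Finset.sum_mul]
    exact Finset.sum_congr rfl fun i _ => by ring
  have h1 : ∀ m : Fin n → L, E1 ((X.map σ).mulVecLin m)
      = (X.mulVecLin.baseChange L) (E1 m) := by
    intro m
    have h := S1 (E1 m)
    rw [show (TensorProduct.piScalarRight K L L (Fin n)) (E1 m) = m from
      (TensorProduct.piScalarRight K L L (Fin n)).apply_symm_apply m] at h
    rw [← h]
    exact (TensorProduct.piScalarRight K L L (Fin n)).symm_apply_apply _
  have S2 : ∀ w : L ⊗[K] (Fin n → K),
      E2 ((X.mulVecLin.baseChange L) w)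
        = ((xOp K (Module.AEval' X.mulVecLin)).baseChange L) (E2 w) := by
    intro w
    refine TensorProduct.induction_on w (by simp) (fun c v => ?_)
      (fun u v hu hv => by simp only [map_add, hu, hv])
    show E2 (c ⊗ₜ X.mulVecLin v) = _
    have h2 : ∀ u : Fin n → K, E2 (c ⊗ₜ u) = c ⊗ₜ (Module.AEval'.of X.mulVecLin u) := fun u => rfl
    rw [h2, h2, LinearMap.baseChange_tmul, xOp_apply, Module.AEval'.X_smul_of]
  have S3 : ∀ w : L ⊗[K] (Module.AEval' X.mulVecLin),
      E3 (((xOp K (Module.AEval' X.mulVecLin)).baseChange L) w)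
        = ((xOp K (∀ i, Q i)).baseChange L) (E3 w) := by
    intro w
    refine TensorProduct.induction_on w (by simp) (fun c v => ?_)
      (fun u v hu hv => by simp only [map_add, hu, hv])
    have h2 : ∀ u, E3 (c ⊗ₜ u) = c ⊗ₜ (g1 u) := fun u => rfl
    rw [LinearMap.baseChange_tmul, xOp_apply, h2, h2, LinearMap.baseChange_tmul, xOp_apply,
      map_smul]
  have S5 : ∀ w : L ⊗[K] (∀ i, Q i),
      E5 (((xOp K (∀ i, Q i)).baseChange L) w)
        = fun i => ((xOp K (Q i)).baseChange L) (E5 w i) := by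
    intro w
    refine TensorProduct.induction_on w ?_ (fun c F => ?_) (fun u v hu hv => ?_)
    · funext i; simp only [map_zero, Pi.zero_apply, map_zero]
    · funext i
      rw [LinearMap.baseChange_tmul, xOp_apply]
      show (TensorProduct.piRight K L L Q) (c ⊗ₜ (Polynomial.X • F)) i = _
      have h2 : ∀ G : ∀ i, Q i, ∀ i, (TensorProduct.piRight K L L Q) (c ⊗ₜ G) i = c ⊗ₜ G i :=
        fun G i => rfl
      rw [h2, h2, LinearMap.baseChange_tmul, xOp_apply]
      rfl
    · funext i
      simp only [map_add, Pi.add_apply] at hu hv ⊢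
      rw [hu, hv]
  have hf : ∀ m : Fin n → L,
      g ((X.map σ).mulVecLin m) = (Polynomial.X : Polynomial L) • g m := by
    intro m
    show E6 (E5 (E3 (E2 (E1 ((X.map σ).mulVecLin m)))))
      = (Polynomial.X : Polynomial L) • E6 (E5 (E3 (E2 (E1 m))))
    rw [h1, S2, S3, S5]
    have h6 : ∀ v : ∀ i, L ⊗[K] Q i, E6 v = fun i => tensorQuotEquiv L _ (v i) := fun v => rfl
    rw [h6, h6]
    funext i
    rw [tensorQuotEquiv_xOp]
    rfl
  -- assemble
  let EA : Module.AEval' (X.map σ).mulVecLin ≃ₗ[Polynomial L] ∀ i, Polynomial L ⧸ J i :=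
    LinearEquiv.ofAEval ((X.map σ).mulVecLin) g (fun m => hf m)
  -- CRT part
  have hcop : ∀ i : I, Pairwise (Function.onFun IsCoprime
      fun j : Fin d => Ideal.span {(Polynomial.X - Polynomial.C (α j)) ^ (p ^ a * e i)}) := by
    intro i j j' hne
    rw [Function.onFun, Ideal.isCoprime_span_singleton_iff]
    exact ((Polynomial.pairwise_coprime_X_sub_C hinj hne).pow)
  have hJ : ∀ i : I, J i
      = ⨅ j : Fin d, Ideal.span {(Polynomial.X - Polynomial.C (α j)) ^ (p ^ a * e i)} := by
    intro i
    have h1' : J i = Ideal.span {(f.map σ) ^ e i} := by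
      show (Ideal.span {f ^ e i}).map (mapRingHom σ) = _
      rw [Ideal.map_span, Set.image_singleton, map_pow]
      rfl
    rw [h1', hfactor]
    have h2' : (∏ j : Fin d, (Polynomial.X - Polynomial.C (α j)) ^ p ^ a) ^ e i
        = ∏ j : Fin d, (Polynomial.X - Polynomial.C (α j)) ^ (p ^ a * e i) := by
      rw [← Finset.prod_pow]
      exact Finset.prod_congr rfl fun j _ => by rw [← pow_mul]
    rw [h2']
    exact (Ideal.iInf_span_singleton fun j j' hne =>
      ((Polynomial.pairwise_coprime_X_sub_C hinj hne).pow)).symm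
  let Ecrt : (∀ i, Polynomial L ⧸ J i) ≃ₗ[Polynomial L]
      ∀ i : I, ∀ j : Fin d,
        Polynomial L ⧸ Ideal.span {(Polynomial.X - Polynomial.C (α j)) ^ (p ^ a * e i)} :=
    LinearEquiv.piCongrRight (fun i =>
      (Submodule.quotEquivOfEq _ _ (hJ i)) ≪≫ₗ crtLin _ (hcop i))
  let Eswap := piProdComm (Polynomial L)
    (fun (j : Fin d) (i : I) =>
      Polynomial L ⧸ Ideal.span {(Polynomial.X - Polynomial.C (α j)) ^ (p ^ a * e i)})
  exact ⟨EA ≪≫ₗ Ecrt ≪≫ₗ Eswap ≪≫ₗ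
    (DirectSum.linearEquivFunOnFintype (Polynomial L) (Fin d × I) _).symm⟩
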